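/- Kirszbraun's lemma on intersections of balls: Let m, n, k be natural numbers, let x₁, …, x_k ∈ ℝᵐ and y₁, …, y_k ∈ ℝⁿ satisfy ‖y_i − y_j‖ ≤ ‖x_i − x_j‖ for all 1 ≤ i, j ≤ k, and let r₁, …, r_k be positive real numbers. If the closed balls B̄(x₁, r₁), …, B̄(x_k, r_k) have a common point in ℝᵐ, then the closed balls B̄(y₁, r₁), …, B̄(y_k, r_k) have a common point in ℝⁿ. -/

import Mathlib

open Metric Finset
open scoped RealInnerProductSpace

/-- Kirszbraun's lemma on intersections of balls: if `‖y i - y j‖ ≤ ‖x i - x j‖` for all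
`i, j` and the closed balls `B̄(x i, r i)` have a common point, then so do the closed
balls `B̄(y i, r i)`. -/
theorem kirszbraun_balls (m n k : ℕ)
    (x : Fin k → EuclideanSpace ℝ (Fin m)) (y : Fin k → EuclideanSpace ℝ (Fin n))
    (r : Fin k → ℝ) (hr : ∀ i, 0 < r i)
    (hxy : ∀ i j, ‖y i - y j‖ ≤ ‖x i - x j‖)
    (hx : (⋂ i, Metric.closedBall (x i) (r i)).Nonempty) :
    (⋂ i, Metric.closedBall (y i) (r i)).Nonempty := by
  rcases Nat.eq_zero_or_pos k with rfl | hk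
  · rw [Set.iInter_of_empty]; exact Set.univ_nonempty
  obtain ⟨i₀⟩ : Nonempty (Fin k) := ⟨⟨0, hk⟩⟩
  have : Nonempty (Fin k) := ⟨i₀⟩
  obtain ⟨p, hp⟩ := hx
  simp only [Set.mem_iInter, mem_closedBall, dist_comm p] at hp
  set f : EuclideanSpace ℝ (Fin n) → ℝ :=
    fun z => Finset.univ.sup' Finset.univ_nonempty fun i => ‖z - y i‖ ^ 2 - r i ^ 2 with hf
  have hf_cont : Continuous f := by
    apply Continuous.finset_sup'_apply Finset.univ_nonempty
    intro i _
    exact ((continuous_id.sub continuous_const).norm.pow 2).sub continuous_const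
  have hfle : ∀ z i, ‖z - y i‖ ^ 2 - r i ^ 2 ≤ f z :=
    fun z i => Finset.le_sup' (fun i => ‖z - y i‖ ^ 2 - r i ^ 2) (Finset.mem_univ i)
  -- minimizer over a big ball
  set R : ℝ := Real.sqrt (max 0 (f (y i₀)) + r i₀ ^ 2) with hR
  have hRnn : 0 ≤ R := Real.sqrt_nonneg _
  have hRsq : R ^ 2 = max 0 (f (y i₀)) + r i₀ ^ 2 := by
    rw [hR, Real.sq_sqrt]
    positivity
  obtain ⟨z₀, hz₀K, hz₀min⟩ := (isCompact_closedBall (y i₀) R).exists_isMinOn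
    ⟨y i₀, mem_closedBall_self hRnn⟩ hf_cont.continuousOn
  have hglob : ∀ z, f z₀ ≤ f z := by
    intro z
    by_cases hz : z ∈ closedBall (y i₀) R
    · exact hz₀min hz
    · have h1 : R ≤ ‖z - y i₀‖ := by
        rw [mem_closedBall, dist_eq_norm] at hz; linarith [le_of_not_ge hz]
      have h2 : R ^ 2 ≤ ‖z - y i₀‖ ^ 2 := pow_le_pow_left₀ hRnn h1 2
      have h3 : f (y i₀) ≤ ‖z - y i₀‖ ^ 2 - r i₀ ^ 2 := by
        have := le_max_right 0 (f (y i₀)); nlinarith [hRsq]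
      exact le_trans (hz₀min (mem_closedBall_self hRnn)) (le_trans h3 (hfle z i₀))
  -- suffices f z₀ ≤ 0
  rcases le_or_gt (f z₀) 0 with hle | hc
  · refine ⟨z₀, Set.mem_iInter.2 fun i => ?_⟩
    rw [mem_closedBall, dist_eq_norm]
    have h1 := hfle z₀ i
    have : ‖z₀ - y i‖ ^ 2 ≤ r i ^ 2 := by linarith
    exact (pow_le_pow_iff_left₀ (norm_nonneg _) (hr i).le two_ne_zero).1 this
  exfalso
  set c := f z₀ with hcdef
  -- active set
  set S : Set (EuclideanSpace ℝ (Fin n)) := y '' {i | ‖z₀ - y i‖ ^ 2 - r i ^ 2 = c} with hS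
  have hSne : S.Nonempty := by
    obtain ⟨i, _, hi⟩ := Finset.exists_mem_eq_sup' (Finset.univ_nonempty)
      (fun i => ‖z₀ - y i‖ ^ 2 - r i ^ 2)
    exact ⟨y i, i, hi.symm, rfl⟩
  have hSfin : S.Finite := (Set.finite_range y).subset (Set.image_subset_range y _)
  have hCcomp : IsCompact (convexHull ℝ S) := hSfin.isCompact_convexHull (𝕜 := ℝ)
  have hCne : (convexHull ℝ S).Nonempty := Set.Nonempty.mono (subset_convexHull ℝ S) hSne
  have hz₀C : z₀ ∈ convexHull ℝ S := by
    by_contra hz₀C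
    obtain ⟨q, hqC, hq⟩ := exists_norm_eq_iInf_of_complete_convex hCne hCcomp.isComplete
      (convex_convexHull ℝ S) z₀
    have hineq := (norm_eq_iInf_iff_real_inner_le_zero (convex_convexHull ℝ S) hqC).1 hq
    set v := q - z₀ with hv
    have hvne : v ≠ 0 := by
      intro h
      rw [hv, sub_eq_zero] at h
      exact hz₀C (h ▸ hqC)
    have hvpos : 0 < ‖v‖ ^ 2 := by
      have := norm_pos_iff.2 hvne
      positivity
    have hkey : ∀ i, ‖z₀ - y i‖ ^ 2 - r i ^ 2 = c → ‖v‖ ^ 2 ≤ ⟪y i - z₀, v⟫ := by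
      intro i hi
      have h1 : ⟪z₀ - q, y i - q⟫ ≤ 0 :=
        hineq (y i) (subset_convexHull ℝ S ⟨i, hi, rfl⟩)
      have h2 : ⟪y i - z₀, v⟫ = ⟪v, v⟫ - ⟪z₀ - q, y i - q⟫ := by
        rw [hv]
        simp only [inner_sub_left, inner_sub_right]
        linarith [real_inner_comm z₀ q, real_inner_comm (y i) q, real_inner_comm (y i) z₀]
      rw [h2, real_inner_self_eq_norm_sq]
      linarith
    have hev : ∀ᶠ t in nhdsWithin (0:ℝ) (Set.Ioi 0),
        ∀ i, ‖z₀ + t • v - y i‖ ^ 2 - r i ^ 2 < c := by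
      rw [Filter.eventually_all]
      intro i
      by_cases hi : ‖z₀ - y i‖ ^ 2 - r i ^ 2 = c
      · have hIoo : Set.Ioo (0:ℝ) 1 ∈ nhdsWithin (0:ℝ) (Set.Ioi 0) :=
          Ioo_mem_nhdsGT_of_mem ⟨le_refl 0, one_pos⟩
        filter_upwards [hIoo] with t ht
        have hk2 := hkey i hi
        have hrw : z₀ + t • v - y i = (z₀ - y i) + t • v := by abel
        have expand : ‖z₀ + t • v - y i‖ ^ 2
            = ‖z₀ - y i‖ ^ 2 + 2 * (t * ⟪z₀ - y i, v⟫) + t ^ 2 * ‖v‖ ^ 2 := by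
          rw [hrw, norm_add_sq_real, real_inner_smul_right, norm_smul]
          rw [Real.norm_eq_abs, mul_pow, sq_abs]
        have hflip : ⟪z₀ - y i, v⟫ = - ⟪y i - z₀, v⟫ := by
          rw [← inner_neg_left]; congr 1; abel
        obtain ⟨ht0, ht1⟩ := ht
        have h3 : t * ‖v‖ ^ 2 ≤ t * ⟪y i - z₀, v⟫ := mul_le_mul_of_nonneg_left hk2 ht0.le
        have h4 : t ^ 2 * ‖v‖ ^ 2 < t * ‖v‖ ^ 2 :=
          mul_lt_mul_of_pos_right (by nlinarith) hvpos
        have h5 : 0 < t * ‖v‖ ^ 2 := mul_pos ht0 hvpos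
        have h6 : t * ⟪z₀ - y i, v⟫ = -(t * ⟪y i - z₀, v⟫) := by rw [hflip]; ring
        rw [expand]
        linarith
      · have hlt : ‖z₀ - y i‖ ^ 2 - r i ^ 2 < c := lt_of_le_of_ne (hfle z₀ i) hi
        have hcont : ContinuousAt (fun t : ℝ => ‖z₀ + t • v - y i‖ ^ 2 - r i ^ 2) 0 := by
          fun_prop
        have h0 : Filter.Tendsto (fun t : ℝ => ‖z₀ + t • v - y i‖ ^ 2 - r i ^ 2)
            (nhds 0) (nhds (‖z₀ - y i‖ ^ 2 - r i ^ 2)) := by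
          simpa using hcont.tendsto
        exact (h0.eventually_lt_const hlt).filter_mono nhdsWithin_le_nhds
    obtain ⟨t, ht⟩ := hev.exists
    have hlt : f (z₀ + t • v) < c := by
      show Finset.univ.sup' Finset.univ_nonempty
        (fun i => ‖z₀ + t • v - y i‖ ^ 2 - r i ^ 2) < c
      exact (Finset.sup'_lt_iff Finset.univ_nonempty).2 fun i _ => ht i
    exact absurd (hglob (z₀ + t • v)) (not_le.2 hlt)
  obtain ⟨ι, _, w, zp, hw0, hw1, hzS, hsum⟩ := mem_convexHull_iff_exists_fintype.1 hz₀C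
  have hchoice : ∀ j, ∃ i : Fin k, ‖z₀ - y i‖ ^ 2 - r i ^ 2 = c ∧ y i = zp j := by
    intro j
    obtain ⟨i, hi, hyi⟩ := hzS j
    exact ⟨i, hi, hyi⟩
  choose idx hidx1 hidx2 using hchoice
  have hxr : ∀ i, ‖x i - p‖ ^ 2 ≤ r i ^ 2 := by
    intro i
    have h := hp i
    rw [dist_eq_norm] at h
    exact pow_le_pow_left₀ (norm_nonneg _) h 2
  have hpair : ∀ j l, c + ⟪x (idx j) - p, x (idx l) - p⟫ ≤ ⟪zp j - z₀, zp l - z₀⟫ := by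
    intro j l
    have hyj : ‖zp j - z₀‖ ^ 2 = c + r (idx j) ^ 2 := by
      rw [← hidx2 j, norm_sub_rev]
      linarith [hidx1 j]
    have hyl : ‖zp l - z₀‖ ^ 2 = c + r (idx l) ^ 2 := by
      rw [← hidx2 l, norm_sub_rev]
      linarith [hidx1 l]
    have hyy : ‖zp j - zp l‖ ^ 2 ≤ ‖x (idx j) - x (idx l)‖ ^ 2 := by
      apply pow_le_pow_left₀ (norm_nonneg _)
      rw [← hidx2 j, ← hidx2 l]
      exact hxy _ _
    have e1 : ‖zp j - zp l‖ ^ 2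
        = ‖zp j - z₀‖ ^ 2 - 2 * ⟪zp j - z₀, zp l - z₀⟫ + ‖zp l - z₀‖ ^ 2 := by
      have h := norm_sub_sq_real (zp j - z₀) (zp l - z₀)
      rw [show zp j - z₀ - (zp l - z₀) = zp j - zp l by abel] at h
      linarith
    have e2 : ‖x (idx j) - x (idx l)‖ ^ 2
        = ‖x (idx j) - p‖ ^ 2 - 2 * ⟪x (idx j) - p, x (idx l) - p⟫ + ‖x (idx l) - p‖ ^ 2 := by
      have h := norm_sub_sq_real (x (idx j) - p) (x (idx l) - p)
      rw [show x (idx j) - p - (x (idx l) - p) = x (idx j) - x (idx l) by abel] at h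
      linarith
    linarith [hxr (idx j), hxr (idx l)]
  have hzero : ∑ j, w j • (zp j - z₀) = 0 := by
    simp only [smul_sub, Finset.sum_sub_distrib, hsum, ← Finset.sum_smul, hw1, one_smul, sub_self]
  have G : ∀ (E : Type) [inst : NormedAddCommGroup E] [inst2 : InnerProductSpace ℝ E]
      (u : ι → E), ⟪∑ j, w j • u j, ∑ l, w l • u l⟫
        = ∑ j, ∑ l, w j * w l * ⟪u j, u l⟫ := by
    intro E _ _ u
    rw [sum_inner]
    refine Finset.sum_congr rfl fun j _ => ?_
    rw [inner_sum]
    refine Finset.sum_congr rfl fun l _ => ?_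
    rw [real_inner_smul_left, real_inner_smul_right]
    ring
  have hZ : ∑ j, ∑ l, w j * w l * ⟪zp j - z₀, zp l - z₀⟫ = 0 := by
    rw [← G _ (fun j => zp j - z₀), hzero, inner_zero_left]
  have hsum_le : ∑ j, ∑ l, w j * w l * (c + ⟪x (idx j) - p, x (idx l) - p⟫)
      ≤ ∑ j, ∑ l, w j * w l * ⟪zp j - z₀, zp l - z₀⟫ := by
    refine Finset.sum_le_sum fun j _ => Finset.sum_le_sum fun l _ => ?_
    exact mul_le_mul_of_nonneg_left (hpair j l) (mul_nonneg (hw0 j) (hw0 l))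
  have hsplit : ∑ j, ∑ l, w j * w l * (c + ⟪x (idx j) - p, x (idx l) - p⟫)
      = c + ‖∑ j, w j • (x (idx j) - p)‖ ^ 2 := by
    have hA : ∑ j, ∑ l, w j * w l * c = c := by
      have : ((∑ j, w j) * (∑ l, w l)) * c = ∑ j, ∑ l, w j * w l * c := by
        rw [Finset.sum_mul_sum, Finset.sum_mul]
        exact Finset.sum_congr rfl fun j _ => by rw [Finset.sum_mul]
      rw [← this, hw1]
      ring
    have hB : ∑ j, ∑ l, w j * w l * ⟪x (idx j) - p, x (idx l) - p⟫
        = ‖∑ j, w j • (x (idx j) - p)‖ ^ 2 := by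
      rw [← G _ (fun j => x (idx j) - p), real_inner_self_eq_norm_sq]
    calc ∑ j, ∑ l, w j * w l * (c + ⟪x (idx j) - p, x (idx l) - p⟫)
        = ∑ j, ∑ l, (w j * w l * c + w j * w l * ⟪x (idx j) - p, x (idx l) - p⟫) := by
          refine Finset.sum_congr rfl fun j _ => Finset.sum_congr rfl fun l _ => by ring
      _ = ∑ j, ∑ l, w j * w l * c
          + ∑ j, ∑ l, w j * w l * ⟪x (idx j) - p, x (idx l) - p⟫ := by
          rw [← Finset.sum_add_distrib]
          exact Finset.sum_congr rfl fun j _ => Finset.sum_add_distrib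
      _ = c + ‖∑ j, w j • (x (idx j) - p)‖ ^ 2 := by rw [hA, hB]
  rw [hZ, hsplit] at hsum_le
  nlinarith [sq_nonneg ‖∑ j, w j • (x (idx j) - p)‖]
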